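/- Let L = (S, step) be a labelled transition system over Σ and let A ⊆ Σ. Define the hiding LTS L' = (S, step') by: step' P none Q holds iff step P none Q holds or step P (some a) Q holds for some a ∈ A; and step' P (some a) Q holds iff step P (some a) Q holds and a ∉ A. Then for every state P, the availability traces of P in L' equal hide_A applied to the availability traces of P in L: availTraces_{L'}(P) = hide_A(availTraces_L(P)). -/

import Mathlib

/-- An availability action over the alphabet `E`: `Sum.inl a` is an ordinary event `a ∈ Σ`,
and `Sum.inr a` is the offer `◎a` of the event `a ∈ Σ`. -/
abbrev Act (E : Type*) := E ⊕ E

variable {E : Type*}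

/-- `HasTrace step P tr` holds if `tr` is an availability trace of the state `P` of the LTS
with transition relation `step`: `tr` is the sequence of non-τ labels of some finite sequence
of consecutive derived transitions starting at `P`, where the derived transitions are the
ordinary transitions (labelled by `none` for τ, or `some a` for an event `a`), together with
self-loops `P ⟶◎a P` whenever `P` has an `a`-transition. -/
inductive HasTrace {S : Type*} (step : S → Option E → S → Prop) : S → List (Act E) → Prop
  | nil (P : S) : HasTrace step P []
  | tau {P Q : S} {tr} : step P none Q → HasTrace step Q tr → HasTrace step P tr
  | ev {P Q : S} {a : E} {tr} : step P (some a) Q → HasTrace step Q tr →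
      HasTrace step P (Sum.inl a :: tr)
  | offer {P : S} {a : E} {tr} : (∃ Q, step P (some a) Q) → HasTrace step P tr →
      HasTrace step P (Sum.inr a :: tr)

/-- The set of availability traces of a state `P`. -/
def availTraces {S : Type*} (step : S → Option E → S → Prop) (P : S) : Set (List (Act E)) :=
  {tr | HasTrace step P tr}

open Classical in
/-- `hideTr A tr` is `tr \ A`: the trace `tr` with all ordinary events belonging to `A`
removed. -/
noncomputable def hideTr (A : Set E) : List (Act E) → List (Act E)
  | [] => []
  | Sum.inl a :: tr => if a ∈ A then hideTr A tr else Sum.inl a :: hideTr A tr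
  | Sum.inr a :: tr => Sum.inr a :: hideTr A tr

/-- The semantics of hiding: offers of hidden events are blocked and hidden events are
removed from the trace. -/
noncomputable def hideOp (A : Set E) (T : Set (List (Act E))) : Set (List (Act E)) :=
  {u | ∃ tr ∈ T, (∀ a ∈ A, (Sum.inr a : Act E) ∉ tr) ∧ u = hideTr A tr}

/-- Congruence of the hiding operator: if `step'` is the operational hiding of `A` in
`step` (events in `A` become τ, and are removed from the visible transitions), then the
availability traces of `P` under `step'` are exactly `hideOp A` of its availability traces
under `step`. -/
theorem hide_congruent {E S : Type*} (step step' : S → Option E → S → Prop) (A : Set E)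
    (h_tau : ∀ P Q : S, step' P none Q ↔ (step P none Q ∨ ∃ a ∈ A, step P (some a) Q))
    (h_ev : ∀ (P Q : S) (a : E), step' P (some a) Q ↔ (step P (some a) Q ∧ a ∉ A))
    (P : S) :
    availTraces step' P = hideOp A (availTraces step P) := by
  ext u
  constructor
  · intro h
    induction h with
    | nil P => exact ⟨[], HasTrace.nil P, by simp, rfl⟩
    | tau hst _ ih =>
        obtain ⟨tr, htr, hno, rfl⟩ := ih
        rcases (h_tau _ _).1 hst with h | ⟨a, ha, h⟩
        · exact ⟨tr, HasTrace.tau h htr, hno, rfl⟩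
        · refine ⟨Sum.inl a :: tr, HasTrace.ev h htr, ?_, by simp [hideTr, ha]⟩
          intro b hb; simp only [List.mem_cons]
          rintro (h | h); · exact Sum.inr_ne_inl h
          exact hno b hb h
    | ev hst _ ih =>
        obtain ⟨h, hna⟩ := (h_ev _ _ _).1 hst
        obtain ⟨tr, htr, hno, rfl⟩ := ih
        refine ⟨Sum.inl _ :: tr, HasTrace.ev h htr, ?_, by simp [hideTr, hna]⟩
        intro b hb; simp only [List.mem_cons]
        rintro (h | h); · exact Sum.inr_ne_inl h
        exact hno b hb h
    | offer hst _ ih =>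
        obtain ⟨Q, hQ⟩ := hst
        obtain ⟨h, hna⟩ := (h_ev _ _ _).1 hQ
        obtain ⟨tr, htr, hno, rfl⟩ := ih
        refine ⟨Sum.inr _ :: tr, HasTrace.offer ⟨Q, h⟩ htr, ?_, by simp [hideTr]⟩
        intro b hb; simp only [List.mem_cons]
        rintro (h | h)
        · exact hna (by injection h with h; exact h ▸ hb)
        · exact hno b hb h
  · rintro ⟨tr, htr, hno, rfl⟩
    induction htr with
    | nil P => exact HasTrace.nil P
    | tau hst _ ih =>
        exact HasTrace.tau ((h_tau _ _).2 (Or.inl hst)) (ih hno)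
    | ev hst htr ih =>
        rename_i P Q a tr
        by_cases ha : a ∈ A
        · simp only [hideTr, if_pos ha]
          refine HasTrace.tau ((h_tau _ _).2 (Or.inr ⟨a, ha, hst⟩)) (ih ?_)
          intro b hb hmem; exact hno b hb (List.mem_cons_of_mem _ hmem)
        · simp only [hideTr, if_neg ha]
          refine HasTrace.ev ((h_ev _ _ _).2 ⟨hst, ha⟩) (ih ?_)
          intro b hb hmem; exact hno b hb (List.mem_cons_of_mem _ hmem)
    | offer hst htr ih =>
        rename_i P a tr
        obtain ⟨Q, hQ⟩ := hst
        have ha : a ∉ A := fun h => hno a h List.mem_cons_self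
        simp only [hideTr]
        refine HasTrace.offer ⟨Q, (h_ev _ _ _).2 ⟨hQ, ha⟩⟩ (ih ?_)
        intro b hb hmem; exact hno b hb (List.mem_cons_of_mem _ hmem)
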